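/- Let G be a finite group such that every irreducible complex character of G has degree at most 2. Then G is solvable. -/

import Mathlib

open CategoryTheory Module

namespace Stmt6

variable {G : Type} [Group G]

/-- `p` is an invariant submodule for the representation `ρ`. -/
def Inv {V : Type} [AddCommGroup V] [Module ℂ V] (ρ : Representation ℂ G V)
    (p : Submodule ℂ V) : Prop := ∀ g : G, ∀ v ∈ p, ρ g v ∈ p

def Irred {V : Type} [AddCommGroup V] [Module ℂ V] (ρ : Representation ℂ G V) : Prop :=
  Nontrivial V ∧ ∀ p : Submodule ℂ V, Inv ρ p → p = ⊥ ∨ p = ⊤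

def Good (G : Type) [Group G] : Prop :=
  ∀ (V : Type) [AddCommGroup V] [Module ℂ V] [FiniteDimensional ℂ V]
    (ρ : Representation ℂ G V), Irred ρ → finrank ℂ V ≤ 2

/-- The representation on an invariant submodule. -/
def subRep {V : Type} [AddCommGroup V] [Module ℂ V] (ρ : Representation ℂ G V)
    {p : Submodule ℂ V} (hp : Inv ρ p) : Representation ℂ G ↥p where
  toFun g := (ρ g).restrict (hp g)
  map_one' := by ext x; simp [LinearMap.restrict_apply]
  map_mul' g h := by ext x; simp [LinearMap.restrict_apply]

@[simp] lemma subRep_apply {V : Type} [AddCommGroup V] [Module ℂ V]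
    (ρ : Representation ℂ G V) {p : Submodule ℂ V} (hp : Inv ρ p) (g : G) (x : ↥p) :
    (subRep ρ hp g x : V) = ρ g x := rfl

section Maschke

variable {V : Type} [AddCommGroup V] [Module ℂ V] (ρ : Representation ℂ G V)

/-- An invariant `ℂ`-submodule as a submodule of `ρ.asModule`. -/
def toA {p : Submodule ℂ V} (hp : Inv ρ p) : Submodule (MonoidAlgebra ℂ G) ρ.asModule where
  carrier := p.carrier
  add_mem' := p.add_mem
  zero_mem' := p.zero_mem
  smul_mem' := by
    intro r v hv
    show ρ.asAlgebraHom r v ∈ p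
    induction r using MonoidAlgebra.induction_on with
    | of g => rw [Representation.asAlgebraHom_of]; exact hp g v hv
    | add f g hf hg => rw [map_add]; exact p.add_mem hf hg
    | smul c f hf => rw [map_smul]; exact p.smul_mem c hf

/-- A submodule of `ρ.asModule` as an invariant `ℂ`-submodule. -/
def restrA (q : Submodule (MonoidAlgebra ℂ G) ρ.asModule) : Submodule ℂ V where
  carrier := q.carrier
  add_mem' := q.add_mem
  zero_mem' := q.zero_mem
  smul_mem' := by
    intro c v hv
    have h : (c • v : V) = ρ.asAlgebraHom (algebraMap ℂ _ c) v := by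
      rw [AlgHom.commutes, Module.algebraMap_end_apply]
    show (c • v : V) ∈ q
    rw [h]
    exact q.smul_mem _ hv

lemma mem_toA {p : Submodule ℂ V} (hp : Inv ρ p) (v : V) : v ∈ toA ρ hp ↔ v ∈ p := Iff.rfl

lemma mem_restrA (q : Submodule (MonoidAlgebra ℂ G) ρ.asModule) (v : V) :
    v ∈ restrA ρ q ↔ v ∈ q := Iff.rfl

lemma restrA_inv (q : Submodule (MonoidAlgebra ℂ G) ρ.asModule) : Inv ρ (restrA ρ q) := by
  intro g v hv
  show ρ g v ∈ q
  have h : ρ g v = ρ.asAlgebraHom (MonoidAlgebra.of ℂ G g) v := by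
    rw [Representation.asAlgebraHom_of]
  rw [h]
  exact q.smul_mem _ hv

lemma exists_invariant_compl [Finite G] {p : Submodule ℂ V} (hp : Inv ρ p) :
    ∃ q : Submodule ℂ V, Inv ρ q ∧ IsCompl p q := by
  haveI : Fintype G := Fintype.ofFinite G
  haveI : NeZero ((Fintype.card G : ℂ)) := ⟨Nat.cast_ne_zero.2 Fintype.card_ne_zero⟩
  obtain ⟨q, hq⟩ := MonoidAlgebra.Submodule.exists_isCompl (k := ℂ) (toA ρ hp)
  refine ⟨restrA ρ q, restrA_inv ρ q, ?_, ?_⟩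
  · rw [Submodule.disjoint_def]
    intro x hx hx'
    exact Submodule.disjoint_def.mp hq.disjoint x hx hx'
  · rw [codisjoint_iff_le_sup]
    intro x _
    have : (show ρ.asModule from x) ∈ toA ρ hp ⊔ q := by
      rw [codisjoint_iff.mp hq.codisjoint]; trivial
    obtain ⟨y, hy, z, hz, hyz⟩ := Submodule.mem_sup.mp this
    exact Submodule.mem_sup.mpr ⟨y, hy, z, hz, hyz⟩

end Maschke


section Helpers

variable {V : Type} [AddCommGroup V] [Module ℂ V] (ρ : Representation ℂ G V)

lemma proj_equivariant {p q : Submodule ℂ V} (hp : Inv ρ p) (hq : Inv ρ q)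
    (h : IsCompl p q) (g : G) (v : V) :
    (p.projectionOnto q h (ρ g v) : V) = ρ g (p.projectionOnto q h v) := by
  set π := p.projectionOnto q h with hπ
  have hsub : v - (π v : V) ∈ q := by
    rw [← Submodule.projectionOnto_apply_eq_zero_iff h, map_sub,
      Submodule.projectionOnto_apply_left h, sub_self]
  have hdecomp : ρ g v = ρ g (π v : V) + ρ g (v - (π v : V)) := by
    rw [← map_add, add_sub_cancel]
  rw [hdecomp, map_add, Submodule.projectionOnto_apply_of_mem_right h (hq g _ hsub), add_zero]
  have : π (ρ g (π v : V)) = ⟨ρ g (π v : V), hp g _ (π v).2⟩ := by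
    exact Submodule.projectionOnto_apply_left h ⟨ρ g (π v : V), hp g _ (π v).2⟩
  rw [this]

lemma exists_scalarHom (v₀ : V) (h0 : v₀ ≠ 0)
    (hs : ∀ g : G, ∃ c : ℂ, ρ g v₀ = c • v₀) :
    ∃ χ : G →* ℂˣ, ∀ g : G, ρ g v₀ = (χ g : ℂ) • v₀ := by
  have uniq : ∀ {c c' : ℂ}, c • v₀ = c' • v₀ → c = c' := by
    intro c c' hcc
    by_contra hne
    have := sub_eq_zero.mpr hcc
    rw [← sub_smul] at this
    rcases smul_eq_zero.mp this with h | h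
    · exact hne (sub_eq_zero.mp h)
    · exact h0 h
  choose c hc using hs
  have hmul : ∀ g h : G, c (g * h) = c g * c h := by
    intro g h
    apply uniq
    rw [← hc, map_mul, Module.End.mul_apply, hc, map_smul, hc, smul_smul, mul_comm]
  have hne : ∀ g : G, c g ≠ 0 := by
    intro g hzero
    have h1 : ρ g v₀ = 0 := by rw [hc, hzero, zero_smul]
    have h2 : ρ g⁻¹ (ρ g v₀) = v₀ := by
      rw [← Module.End.mul_apply, ← map_mul, inv_mul_cancel, map_one, Module.End.one_apply]
    rw [h1, map_zero] at h2
    exact h0 h2.symm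
  have hmulU : ∀ g h : G, (fun g => Units.mk0 (c g) (hne g)) (g * h) =
      (fun g => Units.mk0 (c g) (hne g)) g * (fun g => Units.mk0 (c g) (hne g)) h := by
    intro g h
    ext
    simp [hmul]
  exact ⟨MonoidHom.mk' (fun g => Units.mk0 (c g) (hne g)) hmulU, fun g => hc g⟩

lemma schur [FiniteDimensional ℂ V] (hnt : Nontrivial V)
    (hirr : ∀ p : Submodule ℂ V, Inv ρ p → p = ⊥ ∨ p = ⊤)
    (T : Module.End ℂ V) (hT : ∀ g : G, T ∘ₗ ρ g = ρ g ∘ₗ T) :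
    ∃ c : ℂ, T = c • LinearMap.id := by
  obtain ⟨c, hc⟩ := Module.End.exists_eigenvalue T
  refine ⟨c, ?_⟩
  have hbot : T.eigenspace c ≠ ⊥ := hc
  have hinv : Inv ρ (T.eigenspace c) := by
    intro g v hv
    rw [Module.End.mem_eigenspace_iff] at hv ⊢
    have := congrArg (fun f : Module.End ℂ V => f v) (hT g)
    simp only [LinearMap.comp_apply] at this
    rw [this, hv, map_smul]
  rcases hirr _ hinv with h | h
  · exact absurd h hbot
  · ext v
    have hv : v ∈ T.eigenspace c := h ▸ Submodule.mem_top
    rw [Module.End.mem_eigenspace_iff] at hv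
    simpa using hv


end Helpers

section Structure

variable {V : Type} [AddCommGroup V] [Module ℂ V] (ρ : Representation ℂ G V)

lemma irred_subRep {S : Submodule ℂ V} (hS : Inv ρ S) (hne : S ≠ ⊥)
    (hmin : ∀ p ≤ S, Inv ρ p → p = ⊥ ∨ p = S) : Irred (subRep ρ hS) := by
  constructor
  · exact Submodule.nontrivial_iff_ne_bot.mpr hne
  · intro q hq
    have hinj := Submodule.map_injective_of_injective S.injective_subtype
    have hle : q.map S.subtype ≤ S := by
      rintro - ⟨x, -, rfl⟩
      exact x.2
    have hqi : Inv ρ (q.map S.subtype) := by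
      rintro g - ⟨x, hx, rfl⟩
      exact ⟨subRep ρ hS g x, hq g x hx, rfl⟩
    rcases hmin _ hle hqi with h | h
    · left
      apply hinj
      rwa [Submodule.map_bot]
    · right
      apply hinj
      rw [Submodule.map_top, Submodule.range_subtype]
      exact h

variable [FiniteDimensional ℂ V]

lemma exists_minimal : ∀ (n : ℕ) (U : Submodule ℂ V), finrank ℂ U ≤ n → Inv ρ U → U ≠ ⊥ →
    ∃ S, S ≤ U ∧ Inv ρ S ∧ S ≠ ⊥ ∧ ∀ p ≤ S, Inv ρ p → p = ⊥ ∨ p = S := by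
  intro n
  induction n with
  | zero =>
    intro U hU _ hne
    exact absurd (Submodule.finrank_eq_zero.mp (Nat.le_zero.mp hU)) hne
  | succ n ih =>
    intro U hU hUinv hne
    by_cases hirr : ∀ p ≤ U, Inv ρ p → p = ⊥ ∨ p = U
    · exact ⟨U, le_refl U, hUinv, hne, hirr⟩
    · push_neg at hirr
      obtain ⟨p, hpU, hpinv, hpbot, hpne⟩ := hirr
      have hlt : p < U := lt_of_le_of_ne hpU hpne
      have : finrank ℂ p ≤ n := by
        have := Submodule.finrank_lt_finrank_of_lt hlt
        omega
      obtain ⟨S, hS1, hS2, hS3, hS4⟩ := ih p this hpinv hpbot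
      exact ⟨S, le_trans hS1 hpU, hS2, hS3, hS4⟩

lemma exists_minimal_moved [Finite G] (g₀ : G) :
    ∀ (n : ℕ) (U : Submodule ℂ V), finrank ℂ U ≤ n → Inv ρ U → (∃ v ∈ U, ρ g₀ v ≠ v) →
    ∃ S, Inv ρ S ∧ S ≠ ⊥ ∧ (∀ p ≤ S, Inv ρ p → p = ⊥ ∨ p = S) ∧ ∃ w ∈ S, ρ g₀ w ≠ w := by
  intro n
  induction n with
  | zero =>
    intro U hU _ ⟨v, hv, hmoved⟩
    rw [Submodule.finrank_eq_zero.mp (Nat.le_zero.mp hU)] at hv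
    rw [Submodule.mem_bot] at hv
    subst hv
    simp at hmoved
  | succ n ih =>
    intro U hUn hUinv ⟨v, hvU, hmoved⟩
    have hUne : U ≠ ⊥ := by
      rintro rfl
      rw [Submodule.mem_bot] at hvU
      subst hvU
      simp at hmoved
    obtain ⟨S, hSU, hSinv, hSne, hSmin⟩ :=
      exists_minimal ρ (finrank ℂ U) U le_rfl hUinv hUne
    by_cases hfix : ∃ w ∈ S, ρ g₀ w ≠ w
    · exact ⟨S, hSinv, hSne, hSmin, hfix⟩
    · push_neg at hfix
      obtain ⟨C, hCinv, hC⟩ := exists_invariant_compl ρ hSinv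
      set U' := U ⊓ C with hU'
      have hU'inv : Inv ρ U' := by
        intro g w hw
        rw [Submodule.mem_inf] at hw ⊢
        exact ⟨hUinv g w hw.1, hCinv g w hw.2⟩
      have hmem : ∃ w ∈ U', ρ g₀ w ≠ w := by
        set π := S.projectionOnto C hC with hπ
        refine ⟨v - π v, Submodule.mem_inf.mpr ⟨?_, ?_⟩, ?_⟩
        · exact U.sub_mem hvU (hSU (π v).2)
        · rw [← Submodule.projectionOnto_apply_eq_zero_iff hC, map_sub,
            Submodule.projectionOnto_apply_left hC, sub_self]
        · intro heq
          apply hmoved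
          have h1 : ρ g₀ (π v : V) = π v := hfix _ (π v).2
          have h2 : ρ g₀ v = ρ g₀ (v - π v) + ρ g₀ (π v : V) := by
            rw [← map_add, sub_add_cancel]
          rw [h2, heq, h1, sub_add_cancel]
      have hcard : finrank ℂ U' ≤ n := by
        have hdisj : U' ⊓ S = ⊥ := by
          rw [eq_bot_iff]
          intro x hx
          rw [Submodule.mem_inf] at hx
          have hx1 := Submodule.mem_inf.mp hx.1
          have := Submodule.disjoint_def.mp hC.disjoint x hx.2 hx1.2
          simp [this]
        have hsup : U' ⊔ S ≤ U := sup_le inf_le_left hSU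
        have h1 : finrank ℂ U' + finrank ℂ S ≤ finrank ℂ U := by
          have := Submodule.finrank_sup_add_finrank_inf_eq U' S
          rw [hdisj] at this
          simp only [finrank_bot, add_zero] at this
          rw [← this]
          exact Submodule.finrank_mono hsup
        have h2 : 1 ≤ finrank ℂ S := by
          rw [Nat.one_le_iff_ne_zero]
          intro h0
          exact hSne (Submodule.finrank_eq_zero.mp h0)
        omega
      exact ih U' hcard hU'inv hmem

end Structure

section Inherit

variable [Finite G]

/-- The right-translation representation on functions `G → W`. -/
def piRep (W : Type) [AddCommGroup W] [Module ℂ W] : Representation ℂ G (G → W) where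
  toFun g :=
    { toFun := fun f x => f (x * g)
      map_add' := fun f₁ f₂ => rfl
      map_smul' := fun c f => rfl }
  map_one' := by ext f x; simp
  map_mul' g h := by ext f x; simp [mul_assoc]

open Classical in
/-- Embedding of an `H`-representation into functions `G → W`. -/
noncomputable def phi (H : Subgroup G) {W : Type} [AddCommGroup W] [Module ℂ W]
    (σ : Representation ℂ (↥H) W) : W →ₗ[ℂ] (G → W) where
  toFun := fun w x => if hx : x ∈ H then σ ⟨x, hx⟩ w else 0
  map_add' := by
    intro w₁ w₂
    funext x
    rw [Pi.add_apply]
    by_cases hx : x ∈ H <;> simp [hx]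
  map_smul' := by
    intro c w
    funext x
    rw [Pi.smul_apply]
    by_cases hx : x ∈ H <;> simp [hx]

lemma good_subgroup (hG : Good G) (H : Subgroup G) : Good ↥H := by
  intro W _ _ _ σ hirr
  classical
  set ρF := piRep (G := G) W with hρF
  set φ := phi H σ with hφdef
  have hφ_apply : ∀ (w : W) (x : G), φ w x = if hx : x ∈ H then σ ⟨x, hx⟩ w else 0 :=
    fun w x => rfl
  have hφ_inj : Function.Injective φ := by
    intro w₁ w₂ h
    have h1 := congrFun h (1 : G)
    simp only [hφ_apply, dif_pos H.one_mem] at h1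
    have e : (⟨(1 : G), H.one_mem⟩ : ↥H) = 1 := rfl
    rwa [e, map_one, Module.End.one_apply, Module.End.one_apply] at h1
  have hφ_equiv : ∀ (h : ↥H) (w : W), ρF (h : G) (φ w) = φ (σ h w) := by
    intro h w
    funext x
    show φ w (x * (h : G)) = φ (σ h w) x
    by_cases hx : x ∈ H
    · have hxh : x * (h : G) ∈ H := H.mul_mem hx h.2
      simp only [hφ_apply, dif_pos hx, dif_pos hxh]
      have e : (⟨x * (h : G), hxh⟩ : ↥H) = ⟨x, hx⟩ * h := rfl
      rw [e, map_mul, Module.End.mul_apply]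
    · have hxh : ¬(x * (h : G) ∈ H) := by
        intro hmem
        exact hx (by simpa using H.mul_mem hmem (H.inv_mem h.2))
      simp only [hφ_apply, dif_neg hx, dif_neg hxh]
  obtain ⟨hWnt, hWirr⟩ := hirr
  suffices hdesc : ∀ (n : ℕ) (U : Submodule ℂ (G → W)), finrank ℂ U ≤ n → Inv ρF U →
      LinearMap.range φ ≤ U → finrank ℂ W ≤ 2 by
    refine hdesc (finrank ℂ (⊤ : Submodule ℂ (G → W))) ⊤ le_rfl (fun _ _ _ => trivial) le_top
  intro n
  induction n with
  | zero =>
    intro U hU hUinv hrange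
    exfalso
    obtain ⟨w, hw⟩ := exists_ne (0 : W)
    have : φ w ∈ U := hrange ⟨w, rfl⟩
    rw [Submodule.finrank_eq_zero.mp (Nat.le_zero.mp hU), Submodule.mem_bot] at this
    exact hw (hφ_inj (by rw [this, map_zero]))
  | succ n ih =>
    intro U hU hUinv hrange
    have hUne : U ≠ ⊥ := by
      rintro rfl
      obtain ⟨w, hw⟩ := exists_ne (0 : W)
      have : φ w ∈ (⊥ : Submodule ℂ (G → W)) := hrange ⟨w, rfl⟩
      rw [Submodule.mem_bot] at this
      exact hw (hφ_inj (by rw [this, map_zero]))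
    obtain ⟨S, hSU, hSinv, hSne, hSmin⟩ :=
      exists_minimal ρF (finrank ℂ U) U le_rfl hUinv hUne
    obtain ⟨C, hCinv, hC⟩ := exists_invariant_compl ρF hSinv
    set π := S.projectionOnto C hC with hπ
    set ψ : W →ₗ[ℂ] ↥S := π ∘ₗ φ with hψ
    by_cases hψ0 : ψ = 0
    · set U' := U ⊓ C with hU'
      have hU'inv : Inv ρF U' := by
        intro g w hw
        rw [Submodule.mem_inf] at hw ⊢
        exact ⟨hUinv g w hw.1, hCinv g w hw.2⟩
      have hrange' : LinearMap.range φ ≤ U' := by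
        rintro - ⟨w, rfl⟩
        rw [Submodule.mem_inf]
        refine ⟨hrange ⟨w, rfl⟩, ?_⟩
        have hz : ψ w = 0 := by rw [hψ0]; rfl
        have hz' : π (φ w) = 0 := hz
        exact (Submodule.projectionOnto_apply_eq_zero_iff hC).mp hz'
      have hcard : finrank ℂ U' ≤ n := by
        have hdisj : U' ⊓ S = ⊥ := by
          rw [eq_bot_iff]
          intro x hx
          rw [Submodule.mem_inf] at hx
          have hx1 := Submodule.mem_inf.mp hx.1
          have := Submodule.disjoint_def.mp hC.disjoint x hx.2 hx1.2
          simp [this]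
        have hsup : U' ⊔ S ≤ U := sup_le inf_le_left hSU
        have h1 : finrank ℂ U' + finrank ℂ S ≤ finrank ℂ U := by
          have := Submodule.finrank_sup_add_finrank_inf_eq U' S
          rw [hdisj] at this
          simp only [finrank_bot, add_zero] at this
          rw [← this]
          exact Submodule.finrank_mono hsup
        have h2 : 1 ≤ finrank ℂ S := by
          rw [Nat.one_le_iff_ne_zero]
          intro h0
          exact hSne (Submodule.finrank_eq_zero.mp h0)
        omega
      exact ih U' hcard hU'inv hrange'
    · have hψequiv : ∀ (h : ↥H) (w : W), (ψ (σ h w) : G → W) = ρF (h : G) (ψ w : G → W) := by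
        intro h w
        show (π (φ (σ h w)) : G → W) = ρF (h : G) (π (φ w) : G → W)
        rw [← hφ_equiv h w]
        exact proj_equivariant ρF hSinv hCinv hC _ _
      have hkerinv : Inv σ (LinearMap.ker ψ) := by
        intro h w hw
        rw [LinearMap.mem_ker] at hw ⊢
        have := hψequiv h w
        rw [hw] at this
        apply Subtype.coe_injective
        simpa using this
      have hker : LinearMap.ker ψ = ⊥ := by
        rcases hWirr (LinearMap.ker ψ) hkerinv with h | h
        · exact h
        · exfalso
          apply hψ0
          refine LinearMap.ext fun w => ?_
          have : w ∈ LinearMap.ker ψ := h ▸ Submodule.mem_top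
          exact LinearMap.mem_ker.mp this
      have hinj : finrank ℂ W ≤ finrank ℂ S := by
        apply LinearMap.finrank_le_finrank_of_injective (f := ψ)
        rw [← LinearMap.ker_eq_bot]
        exact hker
      have hS2 : finrank ℂ S ≤ 2 :=
        hG ↥S (subRep ρF hSinv) (irred_subRep ρF hSinv hSne hSmin)
      omega

omit [Finite G] in
lemma good_quotient (hG : Good G) (N : Subgroup G) [N.Normal] : Good (G ⧸ N) := by
  intro W _ _ _ σ hirr
  refine hG W (σ.comp (QuotientGroup.mk' N)) ⟨hirr.1, ?_⟩
  intro p hp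
  refine hirr.2 p ?_
  intro q v hv
  induction q using QuotientGroup.induction_on with
  | H g => exact hp g v hv

end Inherit

section Faithful

variable {V : Type} [AddCommGroup V] [Module ℂ V] (ρ : Representation ℂ G V)

lemma solvable_of_faithful_dim1 [FiniteDimensional ℂ V] (hinj : Function.Injective ρ)
    (h1 : finrank ℂ V = 1) : IsSolvable G := by
  obtain ⟨v₀, hv₀, hgen⟩ := finrank_eq_one_iff'.mp h1
  obtain ⟨χ, hχ⟩ := exists_scalarHom ρ v₀ hv₀ (fun g => by
    obtain ⟨c, hc⟩ := hgen (ρ g v₀); exact ⟨c, hc.symm⟩)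
  apply isSolvable_of_comm
  intro a b
  apply hinj
  refine LinearMap.ext fun v => ?_
  obtain ⟨c, hc⟩ := hgen v
  rw [← hc, map_smul, map_smul, hχ, hχ, map_mul, map_mul]
  rw [smul_smul, smul_smul, Units.val_mul, Units.val_mul, mul_comm (χ a : ℂ)]

/-- The conjugation representation on `End ℂ V`. -/
def conjRep : Representation ℂ G (Module.End ℂ V) where
  toFun g :=
    { toFun := fun T => ρ g ∘ₗ T ∘ₗ ρ g⁻¹
      map_add' := fun T₁ T₂ => by
        simp only [LinearMap.add_comp, LinearMap.comp_add]
      map_smul' := fun c T => by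
        simp only [LinearMap.smul_comp, LinearMap.comp_smul, RingHom.id_apply] }
  map_one' := by
    refine LinearMap.ext fun T => ?_
    show ρ 1 ∘ₗ T ∘ₗ ρ 1⁻¹ = T
    rw [inv_one, map_one]
    rfl
  map_mul' g h := by
    refine LinearMap.ext fun T => ?_
    show ρ (g * h) ∘ₗ T ∘ₗ ρ (g * h)⁻¹ = ρ g ∘ₗ (ρ h ∘ₗ T ∘ₗ ρ h⁻¹) ∘ₗ ρ g⁻¹
    rw [mul_inv_rev, map_mul, map_mul]
    rfl

lemma conjRep_apply (g : G) (T : Module.End ℂ V) : conjRep ρ g T = ρ g ∘ₗ T ∘ₗ ρ g⁻¹ := rfl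

lemma rho_inv_comp (g : G) : ρ g⁻¹ ∘ₗ ρ g = LinearMap.id := by
  refine LinearMap.ext fun v => ?_
  show ρ g⁻¹ (ρ g v) = v
  rw [← Module.End.mul_apply, ← map_mul, inv_mul_cancel, map_one, Module.End.one_apply]

lemma comp_rho_inv (g : G) : ρ g ∘ₗ ρ g⁻¹ = LinearMap.id := by
  have := rho_inv_comp ρ g⁻¹
  rwa [inv_inv] at this

/-- traceless endomorphisms -/
noncomputable def sl : Submodule ℂ (Module.End ℂ V) := LinearMap.ker (LinearMap.trace ℂ V)

lemma sl_inv [FiniteDimensional ℂ V] : Inv (conjRep ρ) (sl (V := V)) := by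
  intro g T hT
  rw [sl, LinearMap.mem_ker] at hT ⊢
  rw [conjRep_apply, ← LinearMap.comp_assoc, LinearMap.trace_comp_comm',
    ← LinearMap.comp_assoc, rho_inv_comp, LinearMap.id_comp]
  exact hT

lemma finrank_sl [FiniteDimensional ℂ V] (h2 : finrank ℂ V = 2) :
    finrank ℂ (sl (V := V)) = 3 := by
  have hrange : LinearMap.range (LinearMap.trace ℂ V) = ⊤ := by
    rcases eq_bot_or_eq_top (LinearMap.range (LinearMap.trace ℂ V)) with h | h
    · exfalso
      have : LinearMap.trace ℂ V LinearMap.id = 0 := by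
        have : LinearMap.trace ℂ V LinearMap.id ∈ LinearMap.range (LinearMap.trace ℂ V) :=
          ⟨LinearMap.id, rfl⟩
        rw [h, Submodule.mem_bot] at this
        exact this
      rw [LinearMap.trace_id, h2] at this
      norm_num at this
    · exact h
  have hfr := LinearMap.finrank_range_add_finrank_ker (LinearMap.trace ℂ V)
  rw [hrange] at hfr
  have hend : finrank ℂ (Module.End ℂ V) = 4 := by
    have := Module.finrank_linearMap (R := ℂ) (S := ℂ) (M := V) (N := V)
    rw [h2] at this
    simpa using this
  rw [hend, finrank_top] at hfr
  have : finrank ℂ ℂ = 1 := Module.finrank_self ℂ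
  rw [this] at hfr
  show finrank ℂ (LinearMap.ker (LinearMap.trace ℂ V)) = 3
  omega

lemma exists_invariant_line [Finite G] [FiniteDimensional ℂ V] (hG : Good G) :
    ∀ (n : ℕ) (U : Submodule ℂ V), finrank ℂ U ≤ n → Inv ρ U → Odd (finrank ℂ U) →
    ∃ L, L ≤ U ∧ Inv ρ L ∧ finrank ℂ L = 1 := by
  intro n
  induction n with
  | zero =>
    intro U hU _ hodd
    obtain ⟨k, hk⟩ := hodd
    omega
  | succ n ih =>
    intro U hUn hUinv hodd
    have hUne : U ≠ ⊥ := by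
      intro h
      rw [h, finrank_bot] at hodd
      obtain ⟨k, hk⟩ := hodd
      omega
    obtain ⟨S, hSU, hSinv, hSne, hSmin⟩ :=
      exists_minimal ρ (finrank ℂ U) U le_rfl hUinv hUne
    have hS2 : finrank ℂ S ≤ 2 := hG ↥S (subRep ρ hSinv) (irred_subRep ρ hSinv hSne hSmin)
    have hS1 : 1 ≤ finrank ℂ S := by
      rw [Nat.one_le_iff_ne_zero]
      intro h0
      exact hSne (Submodule.finrank_eq_zero.mp h0)
    rcases Nat.lt_or_ge (finrank ℂ S) 2 with h | h
    · exact ⟨S, hSU, hSinv, by omega⟩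
    · have hSdim : finrank ℂ S = 2 := le_antisymm hS2 h
      obtain ⟨C, hCinv, hC⟩ := exists_invariant_compl ρ hSinv
      set U' := U ⊓ C with hU'
      have hU'inv : Inv ρ U' := by
        intro g w hw
        rw [Submodule.mem_inf] at hw ⊢
        exact ⟨hUinv g w hw.1, hCinv g w hw.2⟩
      set π := S.projectionOnto C hC with hπ
      have hsup : S ⊔ U' = U := by
        apply le_antisymm (sup_le hSU inf_le_left)
        intro v hv
        have hvd : v = (π v : V) + (v - π v) := by abel
        have h1 : (π v : V) ∈ S := (π v).2
        have h2 : v - (π v : V) ∈ U' := by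
          rw [Submodule.mem_inf]
          constructor
          · exact U.sub_mem hv (hSU h1)
          · rw [← Submodule.projectionOnto_apply_eq_zero_iff hC, map_sub,
              Submodule.projectionOnto_apply_left hC, sub_self]
        rw [hvd]
        exact Submodule.add_mem_sup h1 h2
      have hdisj : S ⊓ U' = ⊥ := by
        rw [eq_bot_iff]
        intro x hx
        rw [Submodule.mem_inf] at hx
        have hx2 := Submodule.mem_inf.mp hx.2
        have := Submodule.disjoint_def.mp hC.disjoint x hx.1 hx2.2
        simp [this]
      have heq : finrank ℂ S + finrank ℂ U' = finrank ℂ U := by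
        have h0 := Submodule.finrank_sup_add_finrank_inf_eq S U'
        rw [hsup, hdisj] at h0
        simp only [finrank_bot, add_zero] at h0
        omega
      have hodd' : Odd (finrank ℂ U') := by
        obtain ⟨k, hk⟩ := hodd
        exact ⟨k - 1, by omega⟩
      obtain ⟨L, hLU', hLinv, hL1⟩ := ih U' (by omega) hU'inv hodd'
      exact ⟨L, le_trans hLU' inf_le_left, hLinv, hL1⟩

/-- The quotient representation. -/
def quotRep {p : Submodule ℂ V} (hp : Inv ρ p) : Representation ℂ G (V ⧸ p) where
  toFun g := Submodule.mapQ p p (ρ g) (fun v hv => hp g v hv)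
  map_one' := by
    refine Submodule.linearMap_qext p ?_
    refine LinearMap.ext fun v => ?_
    simp [Submodule.mapQ_apply]
  map_mul' g h := by
    refine Submodule.linearMap_qext p ?_
    refine LinearMap.ext fun v => ?_
    simp [Submodule.mapQ_apply]

lemma quotRep_mk {p : Submodule ℂ V} (hp : Inv ρ p) (g : G) (v : V) :
    quotRep ρ hp g (p.mkQ v) = p.mkQ (ρ g v) := by
  simp [quotRep, Submodule.mapQ_apply]

theorem solvable_of_faithful_dim2 [Finite G] [FiniteDimensional ℂ V] (hG : Good G)
    (hinj : Function.Injective ρ) (h2 : finrank ℂ V = 2) : IsSolvable G := by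
  obtain ⟨L, hLsl, hLinv, hL1⟩ := exists_invariant_line (conjRep ρ) hG
    (finrank ℂ (sl (V := V))) (sl (V := V)) le_rfl (sl_inv ρ)
    (by rw [finrank_sl (V := V) h2]; exact ⟨1, rfl⟩)
  obtain ⟨T₀s, hT₀ne, hT₀gen⟩ := finrank_eq_one_iff'.mp hL1
  set T₀ : Module.End ℂ V := (T₀s : Module.End ℂ V) with hT₀def
  have hT₀0 : T₀ ≠ 0 := by
    intro h
    exact hT₀ne (Subtype.coe_injective h)
  have htrace : LinearMap.trace ℂ V T₀ = 0 := by
    have := hLsl T₀s.2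
    rwa [sl, LinearMap.mem_ker] at this
  have hsc : ∀ g : G, ∃ c : ℂ, conjRep ρ g T₀ = c • T₀ := by
    intro g
    have hmem : conjRep ρ g T₀ ∈ L := hLinv g _ T₀s.2
    obtain ⟨c, hc⟩ := hT₀gen ⟨_, hmem⟩
    refine ⟨c, ?_⟩
    have := congrArg (fun x : ↥L => (x : Module.End ℂ V)) hc
    simpa using this.symm
  obtain ⟨χ, hχ⟩ := exists_scalarHom (conjRep ρ) T₀ hT₀0 hsc
  set K := χ.ker with hKdef
  have hKcomm : ∀ k : G, k ∈ K → T₀ ∘ₗ ρ k = ρ k ∘ₗ T₀ := by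
    intro k hk
    have hk1 : χ k = 1 := hk
    have h1 : conjRep ρ k T₀ = T₀ := by
      rw [hχ, hk1, Units.val_one, one_smul]
    calc T₀ ∘ₗ ρ k = (conjRep ρ k T₀) ∘ₗ ρ k := by rw [h1]
      _ = ρ k ∘ₗ T₀ := by
          rw [conjRep_apply, LinearMap.comp_assoc, LinearMap.comp_assoc, rho_inv_comp,
            LinearMap.comp_id]
  have hT₀notscalar : ∀ c : ℂ, T₀ ≠ c • LinearMap.id := by
    intro c hc
    have h1 : LinearMap.trace ℂ V (c • LinearMap.id) = c * 2 := by
      rw [map_smul, LinearMap.trace_id, h2]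
      simp [mul_comm]
    rw [hc] at htrace
    rw [htrace] at h1
    have hc0 : c = 0 := by
      by_contra h0
      exact h0 (by field_simp at h1; simpa using h1.symm)
    rw [hc0, zero_smul] at hc
    exact hT₀0 hc
  set ρK : Representation ℂ ↥K V := ρ.comp K.subtype with hρK
  have hV2 : Nontrivial V := by
    have : 0 < finrank ℂ V := by omega
    exact Module.nontrivial_of_finrank_pos this
  have hnotirr : ¬ (∀ p : Submodule ℂ V, Inv ρK p → p = ⊥ ∨ p = ⊤) := by
    intro hirr
    obtain ⟨c, hc⟩ := schur ρK hV2 hirr T₀ (fun k => hKcomm (k : G) k.2)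
    exact hT₀notscalar c hc
  push_neg at hnotirr
  obtain ⟨p, hpinv, hpbot, hptop⟩ := hnotirr
  have hp1 : finrank ℂ p = 1 := by
    have hlt : finrank ℂ p < 2 := by
      have := Submodule.finrank_lt (K := ℂ) (V := V) hptop
      omega
    have hge : finrank ℂ p ≠ 0 := by
      intro h0
      exact hpbot (Submodule.finrank_eq_zero.mp h0)
    omega
  have hq1 : finrank ℂ (V ⧸ p) = 1 := by
    have := Submodule.finrank_quotient_add_finrank p
    omega
  obtain ⟨v₁, hv₁ne, hv₁gen⟩ := finrank_eq_one_iff'.mp hp1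
  obtain ⟨χ₁, hχ₁⟩ := exists_scalarHom (subRep ρK hpinv) v₁ hv₁ne (fun k => by
    obtain ⟨c, hc⟩ := hv₁gen (subRep ρK hpinv k v₁); exact ⟨c, hc.symm⟩)
  obtain ⟨w₁, hw₁ne, hw₁gen⟩ := finrank_eq_one_iff'.mp hq1
  obtain ⟨χ₂, hχ₂⟩ := exists_scalarHom (quotRep ρK hpinv) w₁ hw₁ne (fun k => by
    obtain ⟨c, hc⟩ := hw₁gen (quotRep ρK hpinv k w₁); exact ⟨c, hc.symm⟩)
  set μ : ↥K →* ℂˣ × ℂˣ := χ₁.prod χ₂ with hμ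
  set K₀ := μ.ker with hK₀
  have hfix_p : ∀ k : ↥K, k ∈ K₀ → ∀ v ∈ p, ρK k v = v := by
    intro k hk v hv
    have hk1 : χ₁ k = 1 := congrArg Prod.fst hk
    obtain ⟨c, hc⟩ := hv₁gen ⟨v, hv⟩
    have h1 : subRep ρK hpinv k ⟨v, hv⟩ = ⟨v, hv⟩ := by
      rw [← hc, map_smul, hχ₁, hk1, Units.val_one, one_smul]
    have := congrArg (fun x : ↥p => (x : V)) h1
    simpa using this
  have hmod_p : ∀ k : ↥K, k ∈ K₀ → ∀ v : V, ρK k v - v ∈ p := by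
    intro k hk v
    have hk2 : χ₂ k = 1 := congrArg Prod.snd hk
    obtain ⟨c, hc⟩ := hw₁gen (p.mkQ v)
    have h1 : quotRep ρK hpinv k (p.mkQ v) = p.mkQ v := by
      rw [← hc, map_smul, hχ₂, hk2, Units.val_one, one_smul]
    rw [quotRep_mk] at h1
    rw [← Submodule.Quotient.mk_eq_zero]
    have : p.mkQ (ρK k v - v) = 0 := by
      rw [map_sub, h1, sub_self]
    simpa [Submodule.mkQ_apply] using this
  have hcomm : ∀ a b : ↥K, a ∈ K₀ → b ∈ K₀ → (a : G) * (b : G) = (b : G) * (a : G) := by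
    intro a b ha hb
    apply hinj
    refine LinearMap.ext fun v => ?_
    have key : ∀ x y : ↥K, x ∈ K₀ → ∀ w : V, ρK y w - w ∈ p →
        ρK x (ρK y w) = ρK x w + ρK y w - w := by
      intro x y hx w hm
      have f := hfix_p x hx _ hm
      calc ρK x (ρK y w) = ρK x (w + (ρK y w - w)) := by
            congr 1
            abel
        _ = ρK x w + ρK x (ρK y w - w) := by rw [map_add]
        _ = ρK x w + (ρK y w - w) := by rw [f]
        _ = ρK x w + ρK y w - w := by abel
    rw [map_mul, map_mul, Module.End.mul_apply, Module.End.mul_apply]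
    show ρK a (ρK b v) = ρK b (ρK a v)
    rw [key a b ha v (hmod_p b hb v), key b a hb v (hmod_p a ha v)]
    abel
  have hsolv₀ : IsSolvable ↥K₀ := by
    apply isSolvable_of_comm
    intro x y
    have := hcomm x.1 y.1 x.2 y.2
    exact Subtype.ext (Subtype.ext this)
  haveI : Group.IsSolvable ↥K₀ := hsolv₀
  haveI : Group.IsSolvable ↥K := by
    apply solvable_of_ker_le_range K₀.subtype μ
    rw [Subgroup.range_subtype]
  exact solvable_of_ker_le_range K.subtype χ (by rw [Subgroup.range_subtype])

end Faithful

section Bridge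

/-- An `FDRep` built from an irreducible representation is `Simple`. -/
lemma simple_of_irred {W : Type} [AddCommGroup W] [Module ℂ W] [FiniteDimensional ℂ W]
    (ρ : Representation ℂ G W) (hirr : Irred ρ) : Simple (FDRep.of ρ) := by
  obtain ⟨hnt, hsub⟩ := hirr
  constructor
  intro Y f hmono
  let f' : (Y : Type) →ₗ[ℂ] W := f.hom.hom.hom
  have hf'hom : ∀ y : (Y : Type), f.hom y = f' y := fun y => rfl
  have hcomm : ∀ (g : G) (y : Y), f' (Y.ρ g y) = ρ g (f' y) := by
    intro g y
    have := f.comm g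
    have h2 := congrArg (fun u => u.hom.hom y) this
    exact h2
  have hzero : ∀ (u : Y ⟶ FDRep.of ρ), u.hom = 0 → u = 0 := by
    intro u hu
    apply Action.hom_ext
    rw [hu, Action.zero_hom]
  have hinj : Function.Injective f' := by
    rw [← LinearMap.ker_eq_bot]
    by_contra hker
    have hKinv : Inv (FDRep.ρ Y) (LinearMap.ker f') := by
      intro g v hv
      rw [LinearMap.mem_ker] at hv ⊢
      rw [hcomm g v, hv, map_zero]
    let Z : FDRep ℂ G := FDRep.of (subRep (FDRep.ρ Y) hKinv)
    let i : Z ⟶ Y :=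
      { hom := FGModuleCat.ofHom ((LinearMap.ker f').subtype : ↥(LinearMap.ker f') →ₗ[ℂ] (Y : Type))
        comm := fun g => by
          ext x
          let x' : ↥(LinearMap.ker f') := x
          show ((LinearMap.ker f').subtype) (subRep (FDRep.ρ Y) hKinv g x') =
            Y.ρ g (x' : (Y : Type))
          simp }
    have hif : i ≫ f = (0 : Z ⟶ Y) ≫ f := by
      apply Action.hom_ext
      ext x
      let x' : ↥(LinearMap.ker f') := x
      show f' (x' : (Y : Type)) = ((0 : Z ⟶ Y) ≫ f).hom x'
      have h0 : ((0 : Z ⟶ Y) ≫ f) = 0 := Limits.zero_comp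
      rw [h0, Action.zero_hom]
      have hx := x'.2
      rw [LinearMap.mem_ker] at hx
      rw [hx]
      rfl
    have hi0 : i = (0 : Z ⟶ Y) := hmono.right_cancellation _ _ hif
    obtain ⟨x₀, hmem, hne⟩ := (Submodule.ne_bot_iff _).mp hker
    have := congrArg (fun u : Z ⟶ Y => u.hom (⟨x₀, hmem⟩ : ↥(LinearMap.ker f'))) hi0
    simp only [Action.zero_hom] at this
    exact hne this
  constructor
  · intro hiso h0
    obtain ⟨w, hw⟩ := exists_ne (0 : W)
    have h1 := CategoryTheory.IsIso.inv_hom_id f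
    have h2 := congrArg (fun u : FDRep.of ρ ⟶ FDRep.of ρ => u.hom w) h1
    simp only [Action.comp_hom] at h2
    have h3 : f.hom ((CategoryTheory.inv f).hom w) = w := h2
    have h4 : (0 : Y ⟶ FDRep.of ρ).hom ((CategoryTheory.inv f).hom w) = w := by
      rw [← h0]; exact h3
    rw [Action.zero_hom] at h4
    exact hw h4.symm
  · intro hf0
    have hne0 : f' ≠ 0 := by
      intro h
      exact hf0 (hzero f (by ext y; exact LinearMap.congr_fun h y))
    have hrinv : Inv ρ (LinearMap.range f') := by
      rintro g - ⟨y, rfl⟩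
      exact ⟨Y.ρ g y, hcomm g y⟩
    have hrange : LinearMap.range f' = ⊤ := by
      rcases hsub _ hrinv with h | h
      · exfalso
        apply hne0
        refine LinearMap.ext fun y => ?_
        have : f' y ∈ LinearMap.range f' := ⟨y, rfl⟩
        rw [h, Submodule.mem_bot] at this
        simpa using this
      · exact h
    have hbij : Function.Bijective f' :=
      ⟨hinj, LinearMap.range_eq_top.mp hrange⟩
    let e := LinearEquiv.ofBijective f' hbij
    have he : ∀ y, e y = f' y := fun y => rfl
    let ginv : FDRep.of ρ ⟶ Y :=
      { hom := FGModuleCat.ofHom (e.symm : W →ₗ[ℂ] (Y : Type))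
        comm := fun g => by
          ext w
          show e.symm (ρ g w) = Y.ρ g (e.symm w)
          apply hinj
          have h1 : f' (e.symm (ρ g w)) = ρ g w := by
            rw [← he, e.apply_symm_apply]
          have h2 : f' (Y.ρ g (e.symm w)) = ρ g w := by
            rw [hcomm, ← he, e.apply_symm_apply]
          rw [h1, h2] }
    refine ⟨⟨ginv, ?_, ?_⟩⟩
    · apply Action.hom_ext
      ext y
      show e.symm (f' y) = y
      rw [← he, e.symm_apply_apply]
    · apply Action.hom_ext
      ext w
      show f' (e.symm w) = w
      rw [← he, e.apply_symm_apply]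

end Bridge

lemma good_of_h (h : ∀ V : FDRep ℂ G, Simple V → finrank ℂ V ≤ 2) : Good G := by
  intro W _ _ _ ρ hirr
  have hs := simple_of_irred ρ hirr
  exact h (FDRep.of ρ) hs

section Main

theorem main : ∀ (n : ℕ) (G : Type) [Group G] [Finite G],
    Nat.card G ≤ n → Good G → IsSolvable G := by
  intro n
  induction n with
  | zero =>
    intro G _ _ hcard _
    have := Nat.card_pos (α := G)
    omega
  | succ n ih =>
    intro G _ _ hcard hG
    rcases subsingleton_or_nontrivial G with hsub | hnt
    · exact (inferInstance : Group.IsSolvable G)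
    · obtain ⟨g₀, hg₀⟩ := exists_ne (1 : G)
      haveI : Fintype G := Fintype.ofFinite G
      haveI : FiniteDimensional ℂ (MonoidAlgebra ℂ G) :=
        inferInstance
      set ρF := Representation.ofMulAction ℂ G G with hρF
      have hmoved : ∃ v ∈ (⊤ : Submodule ℂ (MonoidAlgebra ℂ G)), ρF g₀ v ≠ v := by
        refine ⟨MonoidAlgebra.single 1 1, trivial, ?_⟩
        rw [Representation.ofMulAction_single]
        intro hsingle
        have h1 : g₀ • (1 : G) = 1 :=
          (MonoidAlgebra.single_left_inj (one_ne_zero (α := ℂ))).mp hsingle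
        rw [smul_eq_mul, mul_one] at h1
        exact hg₀ h1
      obtain ⟨S, hSinv, hSne, hSmin, w, hwS, hwmoved⟩ :=
        exists_minimal_moved ρF g₀ (finrank ℂ (⊤ : Submodule ℂ (MonoidAlgebra ℂ G))) ⊤ le_rfl
          (fun _ _ _ => trivial) hmoved
      set σ := subRep ρF hSinv with hσ
      set N := σ.asGroupHom.ker with hN
      have hg₀N : g₀ ∉ N := by
        intro hmem
        have h1 : σ g₀ = 1 := by
          have h2 : σ.asGroupHom g₀ = 1 := hmem
          have h3 := congrArg Units.val h2
          rwa [Representation.asGroupHom_apply] at h3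
        apply hwmoved
        have h2 : σ g₀ ⟨w, hwS⟩ = ⟨w, hwS⟩ := by rw [h1]; rfl
        have h3 := congrArg (fun x : ↥S => (x : MonoidAlgebra ℂ G)) h2
        simpa [hσ] using h3
      by_cases hNbot : N = ⊥
      · have hinj : Function.Injective ⇑σ := by
          intro a b hab
          have h1 : σ.asGroupHom a = σ.asGroupHom b := by
            apply Units.ext
            rw [Representation.asGroupHom_apply, Representation.asGroupHom_apply]
            exact hab
          exact (MonoidHom.ker_eq_bot_iff σ.asGroupHom).mp hNbot h1
        have hIrr := irred_subRep ρF hSinv hSne hSmin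
        have hd : finrank ℂ ↥S ≤ 2 := hG ↥S σ hIrr
        have hd1 : 1 ≤ finrank ℂ ↥S := by
          rw [Nat.one_le_iff_ne_zero]
          intro h0
          exact hSne (Submodule.finrank_eq_zero.mp h0)
        rcases Nat.lt_or_ge (finrank ℂ ↥S) 2 with hlt | hge
        · exact solvable_of_faithful_dim1 σ hinj (by omega)
        · exact solvable_of_faithful_dim2 σ hG hinj (by omega)
      · have hNtop : N ≠ ⊤ := fun h => hg₀N (h ▸ Subgroup.mem_top g₀)
        have hlag : Nat.card G = Nat.card (G ⧸ N) * Nat.card ↥N :=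
          Subgroup.card_eq_card_quotient_mul_card_subgroup N
        haveI : Finite (G ⧸ N) := Quotient.finite _
        have hNpos : 0 < Nat.card ↥N := Nat.card_pos
        have hQpos : 0 < Nat.card (G ⧸ N) := Nat.card_pos
        have hN2 : 2 ≤ Nat.card ↥N := by
          rcases Nat.lt_or_ge (Nat.card ↥N) 2 with h | h
          · exfalso
            have h1 : Nat.card ↥N = 1 := by omega
            exact hNbot ((Subgroup.card_eq_one).mp h1)
          · exact h
        have hQ2 : 2 ≤ Nat.card (G ⧸ N) := by
          rcases Nat.lt_or_ge (Nat.card (G ⧸ N)) 2 with h | h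
          · exfalso
            have h1 : Nat.card (G ⧸ N) = 1 := by omega
            obtain ⟨hss, -⟩ := Nat.card_eq_one_iff_unique.mp h1
            apply hNtop
            rw [Subgroup.eq_top_iff']
            intro g
            rw [← QuotientGroup.eq_one_iff]
            exact Subsingleton.elim _ _
          · exact h
        have hle1 : 2 * Nat.card ↥N ≤ Nat.card G := by
          rw [hlag]
          exact Nat.mul_le_mul_right _ hQ2
        have hle2 : 2 * Nat.card (G ⧸ N) ≤ Nat.card G := by
          rw [hlag, mul_comm 2 (Nat.card (G ⧸ N))]
          exact Nat.mul_le_mul_left _ hN2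
        haveI hs1 : Group.IsSolvable ↥N := ih ↥N (by omega) (good_subgroup hG N)
        haveI hs2 : Group.IsSolvable (G ⧸ N) := ih (G ⧸ N) (by omega) (good_quotient hG N)
        exact solvable_of_ker_le_range N.subtype (QuotientGroup.mk' N)
          (by rw [QuotientGroup.ker_mk', Subgroup.range_subtype])

end Main

end Stmt6

open CategoryTheory

theorem stmt_6 (G : Type) [Group G] [Finite G]
    (h : ∀ V : FDRep ℂ G, Simple V → Module.finrank ℂ V ≤ 2) :
    IsSolvable G := by
  exact Stmt6.main (Nat.card G) G le_rfl (Stmt6.good_of_h h)
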